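/- Let C > 1 and C_R > 0 with C²·C_R < 1. Suppose |W_{mn}| ≤ C^{|m|+|n|}/(|m|^{|m|}|n|^{|n|}) for all m,n ∈ ℤ, and |H_n| ≤ M·((C_R|n|)^{|n|} + (C_R|n|)^{−|n|}) for some M > 0 and all n ≠ 0, with |H_0| ≤ M'. Then there exists a constant C' such that for all sufficiently large K (K > C/(C_R e)), the tail sum ∑_{|m| ≤ K, |n| > K} |W_{mn}|·|H_n| ≤ C'·(C² C_R)^K. -/

import Mathlib

set_option maxHeartbeats 1000000 in
lemma aux_self_le_exp (a : ℝ) : a ≤ Real.exp (a / Real.exp 1) := by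
  rcases le_or_gt a 0 with h | h
  · exact h.trans (Real.exp_pos _).le
  · have h1 : a / Real.exp 1 - 1 + 1 ≤ Real.exp (a / Real.exp 1 - 1) := Real.add_one_le_exp _
    have he : (0:ℝ) < Real.exp 1 := Real.exp_pos 1
    calc a = Real.exp 1 * (a / Real.exp 1) := by field_simp
    _ ≤ Real.exp 1 * Real.exp (a / Real.exp 1 - 1) := by
        apply mul_le_mul_of_nonneg_left _ he.le
        linarith
    _ = Real.exp (a / Real.exp 1) := by
        rw [← Real.exp_add]; ring_nf

lemma aux_tsum (ρ : ℝ) (h0 : 0 ≤ ρ) (h1 : ρ < 1) (K : ℕ) :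
    Summable (fun n : {n : ℤ // (K : ℤ) < |n|} => ρ ^ (n.1.natAbs - (K+1))) ∧
    (∑' n : {n : ℤ // (K : ℤ) < |n|}, ρ ^ (n.1.natAbs - (K+1))) ≤ 2 * (1 - ρ)⁻¹ := by
  have hinj : Function.Injective
      (fun n : {n : ℤ // (K : ℤ) < |n|} => ((decide (0 < n.1), n.1.natAbs - (K+1)) : Bool × ℕ)) := by
    rintro ⟨n, hn⟩ ⟨n', hn'⟩ h
    simp only [Prod.mk.injEq, decide_eq_decide] at h
    rw [Int.abs_eq_natAbs] at hn hn'
    have : n = n' := by omega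
    exact Subtype.ext this
  have hG : Summable (fun p : Bool × ℕ => ρ ^ p.2) := by
    apply (summable_prod_of_nonneg (fun p => pow_nonneg h0 _)).2
    exact ⟨fun a => summable_geometric_of_lt_one h0 h1, Summable.of_finite⟩
  have hfs : Summable (fun n : {n : ℤ // (K : ℤ) < |n|} => ρ ^ (n.1.natAbs - (K+1))) := by
    have h2 := hG.comp_injective hinj
    exact h2
  refine ⟨hfs, ?_⟩
  calc (∑' n : {n : ℤ // (K : ℤ) < |n|}, ρ ^ (n.1.natAbs - (K+1)))
      ≤ ∑' p : Bool × ℕ, ρ ^ p.2 :=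
        hfs.tsum_le_tsum_of_inj _ hinj (fun c _ => pow_nonneg h0 _) (fun n => le_rfl) hG
    _ = 2 * (1 - ρ)⁻¹ := by
        rw [hG.tsum_prod' (fun b => summable_geometric_of_lt_one h0 h1), tsum_bool,
          tsum_geometric_of_lt_one h0 h1]
        ring

set_option maxHeartbeats 1600000 in
theorem stmt9 (C C_R M M' : ℝ) (hC : 1 < C) (hCR : 0 < C_R) (hsmall : C ^ 2 * C_R < 1)
    (hM : 0 < M) (hM' : 0 < M')
    (W : ℤ × ℤ → ℂ) (H : ℤ → ℂ)
    (hW : ∀ m n : ℤ, ‖W (m, n)‖ ≤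
      C ^ (m.natAbs + n.natAbs) /
        ((m.natAbs : ℝ) ^ m.natAbs * (n.natAbs : ℝ) ^ n.natAbs))
    (hH : ∀ n : ℤ, n ≠ 0 → ‖H n‖ ≤
      M * ((C_R * n.natAbs) ^ (n.natAbs : ℤ) + (C_R * n.natAbs) ^ (-(n.natAbs : ℤ))))
    (hH0 : ‖H 0‖ ≤ M') :
    ∃ C' > 0, ∀ K : ℕ, C / (C_R * Real.exp 1) < K →
      (∑ m ∈ Finset.Icc (-(K : ℤ)) (K : ℤ),
          ∑' n : {n : ℤ // (K : ℤ) < |n|},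
            ‖W (m, n.1)‖ * ‖H n.1‖) ≤
        C' * (C ^ 2 * C_R) ^ K := by
  have hC0 : (0:ℝ) < C := lt_trans one_pos hC
  set q : ℝ := C ^ 2 * C_R with hqdef
  have hq0 : 0 < q := by positivity
  set ρ : ℝ := max (C * C_R) (Real.exp 1 / 4) with hρdef
  have hCCR0 : (0:ℝ) ≤ C * C_R := by positivity
  have hCCRq : C * C_R ≤ q := by nlinarith
  have hCCR1 : C * C_R < 1 := lt_of_le_of_lt hCCRq hsmall
  have he4 : Real.exp 1 / 4 < 1 := by
    have := Real.exp_one_lt_d9; norm_num at this ⊢; linarith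
  have hρ0 : (0:ℝ) ≤ ρ := le_trans hCCR0 (le_max_left _ _)
  have hρ1 : ρ < 1 := max_lt hCCR1 he4
  have h1ρ : (0:ℝ) < 1 - ρ := by linarith
  have hD0 : (0:ℝ) < 2 * (1 - ρ)⁻¹ := by positivity
  have hE0 : (0:ℝ) < 2 * Real.exp C := by positivity
  refine ⟨M * ((C * C_R + Real.exp (1 / q)) * ((2 * (1 - ρ)⁻¹) * (2 * Real.exp C))), ?_, ?_⟩
  · have : (0:ℝ) < C * C_R + Real.exp (1 / q) := by positivity
    positivity
  intro K hK
  have hKpos : (0:ℝ) < K := lt_trans (by positivity) hK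
  have hK1 : 1 ≤ K := by exact_mod_cast Nat.one_le_iff_ne_zero.mpr (by
    rintro rfl; norm_num at hKpos)
  have hCe : C < (K:ℝ) * (C_R * Real.exp 1) := (div_lt_iff₀ (by positivity)).1 hK
  set r2 : ℝ := Real.exp 1 * K / ((K:ℝ) + 1) ^ 2 with hr2def
  have hr20 : (0:ℝ) ≤ r2 := by positivity
  have hr2ρ : r2 ≤ ρ := by
    refine le_trans ?_ (le_max_right _ _)
    rw [div_le_div_iff₀ (by positivity) (by norm_num)]
    have hKR : (1:ℝ) ≤ (K:ℝ) := by exact_mod_cast hK1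
    nlinarith [Real.exp_pos 1, sq_nonneg ((K:ℝ) - 1)]
  set B : ℝ := (C * C_R) ^ (K + 1) + r2 ^ (K + 1) with hBdef
  have hB0 : (0:ℝ) ≤ B := by positivity
  -- elementary bound for b ≥ K+1
  have hΦ : ∀ b : ℕ, K + 1 ≤ b →
      (C ^ b / (b:ℝ) ^ b) * ((C_R * (b:ℝ)) ^ b + ((C_R * (b:ℝ)) ^ b)⁻¹) ≤
        B * ρ ^ (b - (K + 1)) := by
    intro b hb
    have hbpos : 0 < b := by omega
    have hbR : (0:ℝ) < (b:ℝ) := by exact_mod_cast hbpos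
    have hbK : ((K:ℝ) + 1) ≤ (b:ℝ) := by exact_mod_cast hb
    have hsplit : (C ^ b / (b:ℝ) ^ b) * ((C_R * (b:ℝ)) ^ b + ((C_R * (b:ℝ)) ^ b)⁻¹) =
        (C * C_R) ^ b + (C / (C_R * (b:ℝ) ^ 2)) ^ b := by
      have h1 : ((b:ℝ)) ^ b ≠ 0 := by positivity
      have h2 : C_R ^ b ≠ 0 := by positivity
      rw [mul_pow, mul_pow, div_pow, mul_pow]
      rw [pow_right_comm]
      field_simp
    rw [hsplit]
    have hterm1 : (C * C_R) ^ b ≤ (C * C_R) ^ (K + 1) * ρ ^ (b - (K + 1)) := by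
      have : (C * C_R) ^ b = (C * C_R) ^ (K + 1) * (C * C_R) ^ (b - (K + 1)) := by
        rw [← pow_add]; congr 1; omega
      rw [this]
      exact mul_le_mul_of_nonneg_left
        (pow_le_pow_left₀ hCCR0 (le_max_left _ _) _) (by positivity)
    have hbase : C / (C_R * (b:ℝ) ^ 2) ≤ r2 := by
      rw [hr2def, div_le_div_iff₀ (by positivity) (by positivity)]
      have hsq : ((K:ℝ) + 1) ^ 2 ≤ (b:ℝ) ^ 2 := by nlinarith
      nlinarith [Real.exp_pos 1, mul_pos hCR hbR]
    have hterm2 : (C / (C_R * (b:ℝ) ^ 2)) ^ b ≤ r2 ^ (K + 1) * ρ ^ (b - (K + 1)) := by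
      calc (C / (C_R * (b:ℝ) ^ 2)) ^ b ≤ r2 ^ b := pow_le_pow_left₀ (by positivity) hbase b
        _ = r2 ^ (K + 1) * r2 ^ (b - (K + 1)) := by rw [← pow_add]; congr 1; omega
        _ ≤ r2 ^ (K + 1) * ρ ^ (b - (K + 1)) :=
            mul_le_mul_of_nonneg_left (pow_le_pow_left₀ hr20 hr2ρ _) (by positivity)
    calc (C * C_R) ^ b + (C / (C_R * (b:ℝ) ^ 2)) ^ b
        ≤ (C * C_R) ^ (K + 1) * ρ ^ (b - (K + 1)) + r2 ^ (K + 1) * ρ ^ (b - (K + 1)) :=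
          add_le_add hterm1 hterm2
      _ = B * ρ ^ (b - (K + 1)) := by rw [hBdef]; ring
  obtain ⟨hsumρ, htsumρ⟩ := aux_tsum ρ hρ0 hρ1 K
  -- per-m tsum bound
  set u : ℤ → ℝ := fun m => C ^ m.natAbs / ((m.natAbs : ℝ)) ^ m.natAbs with hudef
  have hu0 : ∀ m : ℤ, 0 ≤ u m := fun m => by simp only [hudef]; positivity
  have hTm : ∀ m : ℤ, (∑' n : {n : ℤ // (K : ℤ) < |n|},
      ‖W (m, n.1)‖ * ‖H n.1‖) ≤
      (M * u m * B) * (2 * (1 - ρ)⁻¹) := by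
    intro m
    have hpt : ∀ n : {n : ℤ // (K : ℤ) < |n|},
        ‖W (m, n.1)‖ * ‖H n.1‖ ≤
          (M * u m * B) * ρ ^ (n.1.natAbs - (K + 1)) := by
      rintro ⟨n, hn⟩
      have hbK : K + 1 ≤ n.natAbs := by
        rw [Int.abs_eq_natAbs] at hn; omega
      have hn0 : n ≠ 0 := by
        intro h; rw [h] at hn; simp at hn; omega
      set b := n.natAbs with hbdef
      have hWb : ‖W (m, n)‖ ≤ u m * (C ^ b / (b:ℝ) ^ b) := by
        have := hW m n
        rw [hudef]
        calc ‖W (m, n)‖ ≤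
            C ^ (m.natAbs + b) / ((m.natAbs : ℝ) ^ m.natAbs * (b:ℝ) ^ b) := this
          _ = C ^ m.natAbs / ((m.natAbs : ℝ)) ^ m.natAbs * (C ^ b / (b:ℝ) ^ b) := by
            rw [pow_add]; ring
      have hHb : ‖H n‖ ≤ M * ((C_R * (b:ℝ)) ^ b + ((C_R * (b:ℝ)) ^ b)⁻¹) := by
        have := hH n hn0
        rwa [zpow_natCast, zpow_neg, zpow_natCast] at this
      calc ‖W (m, n)‖ * ‖H n‖
          ≤ (u m * (C ^ b / (b:ℝ) ^ b)) * (M * ((C_R * (b:ℝ)) ^ b + ((C_R * (b:ℝ)) ^ b)⁻¹)) := by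
            apply mul_le_mul hWb hHb (norm_nonneg _)
            exact mul_nonneg (hu0 m) (by positivity)
        _ = (M * u m) * ((C ^ b / (b:ℝ) ^ b) * ((C_R * (b:ℝ)) ^ b + ((C_R * (b:ℝ)) ^ b)⁻¹)) := by
            ring
        _ ≤ (M * u m) * (B * ρ ^ (b - (K + 1))) := by
            exact mul_le_mul_of_nonneg_left (hΦ b hbK) (mul_nonneg hM.le (hu0 m))
        _ = (M * u m * B) * ρ ^ (b - (K + 1)) := by ring
    have hmaj : Summable (fun n : {n : ℤ // (K : ℤ) < |n|} =>
        (M * u m * B) * ρ ^ (n.1.natAbs - (K + 1))) := hsumρ.mul_left _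
    have hsumW : Summable (fun n : {n : ℤ // (K : ℤ) < |n|} =>
        ‖W (m, n.1)‖ * ‖H n.1‖) :=
      Summable.of_nonneg_of_le
        (fun n => mul_nonneg (norm_nonneg _) (norm_nonneg _)) hpt hmaj
    calc (∑' n : {n : ℤ // (K : ℤ) < |n|}, ‖W (m, n.1)‖ * ‖H n.1‖)
        ≤ ∑' n : {n : ℤ // (K : ℤ) < |n|}, (M * u m * B) * ρ ^ (n.1.natAbs - (K + 1)) :=
          hsumW.tsum_le_tsum hpt hmaj
      _ = (M * u m * B) * ∑' n : {n : ℤ // (K : ℤ) < |n|}, ρ ^ (n.1.natAbs - (K + 1)) :=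
          tsum_mul_left
      _ ≤ (M * u m * B) * (2 * (1 - ρ)⁻¹) :=
          mul_le_mul_of_nonneg_left htsumρ (mul_nonneg (mul_nonneg hM.le (hu0 m)) hB0)
  -- sum over m of u m
  have hsum_u : ∑ m ∈ Finset.Icc (-(K:ℤ)) (K:ℤ), u m ≤ 2 * Real.exp C := by
    set A : Finset ℤ := (Finset.range (K+1)).image (fun j : ℕ => (j:ℤ)) with hA
    set A' : Finset ℤ := (Finset.range (K+1)).image (fun j : ℕ => -(j:ℤ)) with hA'
    have hsubset : Finset.Icc (-(K:ℤ)) (K:ℤ) ⊆ A ∪ A' := by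
      intro m hm
      simp only [Finset.mem_Icc] at hm
      simp only [hA, hA', Finset.mem_union, Finset.mem_image, Finset.mem_range]
      rcases le_or_gt 0 m with h | h
      · exact Or.inl ⟨m.toNat, by omega, by omega⟩
      · exact Or.inr ⟨(-m).toNat, by omega, by omega⟩
    have hrange : ∀ f : ℕ → ℤ, Function.Injective f → (∀ j : ℕ, (f j).natAbs = j) →
        ∑ m ∈ (Finset.range (K+1)).image f, u m ≤ Real.exp C := by
      intro f hfinj hfabs
      rw [Finset.sum_image (fun a _ b _ h => hfinj h)]
      calc ∑ j ∈ Finset.range (K+1), u (f j)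
          ≤ ∑ j ∈ Finset.range (K+1), C ^ j / (j.factorial : ℝ) := by
            apply Finset.sum_le_sum
            intro j _
            simp only [hudef, hfabs]
            apply div_le_div_of_nonneg_left (by positivity) (by positivity)
            exact_mod_cast Nat.factorial_le_pow j
        _ ≤ Real.exp C := Real.sum_le_exp_of_nonneg hC0.le _
    calc ∑ m ∈ Finset.Icc (-(K:ℤ)) (K:ℤ), u m
        ≤ ∑ m ∈ A ∪ A', u m :=
          Finset.sum_le_sum_of_subset_of_nonneg hsubset (fun i _ _ => hu0 i)
      _ ≤ ∑ m ∈ A, u m + ∑ m ∈ A', u m := by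
          have h := Finset.sum_union_inter (s₁ := A) (s₂ := A') (f := u)
          have h2 : 0 ≤ ∑ m ∈ A ∩ A', u m := Finset.sum_nonneg (fun i _ => hu0 i)
          linarith
      _ ≤ Real.exp C + Real.exp C := by
          apply add_le_add
          · exact hrange _ (fun a b h => by exact_mod_cast h) (fun j => Int.natAbs_natCast j)
          · exact hrange _ (fun a b h => by omega) (fun j => by simp)
      _ = 2 * Real.exp C := by ring
  -- bound on B
  have hBq : B ≤ (C * C_R + Real.exp (1 / q)) * q ^ K := by
    have h1 : (C * C_R) ^ (K + 1) ≤ (C * C_R) * q ^ K := by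
      rw [pow_succ']
      exact mul_le_mul_of_nonneg_left (pow_le_pow_left₀ hCCR0 hCCRq K) hCCR0
    have h2 : r2 ^ (K + 1) ≤ Real.exp (1 / q) * q ^ K := by
      have ha0 : (0:ℝ) ≤ Real.exp 1 / (((K:ℝ) + 1) * q) := by positivity
      have hstep1 : r2 ≤ Real.exp 1 / ((K:ℝ) + 1) := by
        rw [hr2def, div_le_div_iff₀ (by positivity) (by positivity)]
        nlinarith [Real.exp_pos 1]
      have hsplit : Real.exp 1 / ((K:ℝ) + 1) = (Real.exp 1 / (((K:ℝ) + 1) * q)) * q := by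
        field_simp
      have hstep2 : (Real.exp 1 / (((K:ℝ) + 1) * q)) ^ (K + 1) ≤ Real.exp (1 / q) := by
        calc (Real.exp 1 / (((K:ℝ) + 1) * q)) ^ (K + 1)
            ≤ (Real.exp ((Real.exp 1 / (((K:ℝ) + 1) * q)) / Real.exp 1)) ^ (K + 1) :=
              pow_le_pow_left₀ ha0 (aux_self_le_exp _) _
          _ = Real.exp ((K + 1 : ℕ) * ((Real.exp 1 / (((K:ℝ) + 1) * q)) / Real.exp 1)) :=
              (Real.exp_nat_mul _ _).symm
          _ = Real.exp (1 / q) := by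
              congr 1
              have hexpne : Real.exp 1 ≠ 0 := (Real.exp_pos 1).ne'
              have hKne : ((K:ℝ) + 1) ≠ 0 := by positivity
              push_cast
              field_simp
      calc r2 ^ (K + 1) ≤ (Real.exp 1 / ((K:ℝ) + 1)) ^ (K + 1) :=
            pow_le_pow_left₀ hr20 hstep1 _
        _ = (Real.exp 1 / (((K:ℝ) + 1) * q)) ^ (K + 1) * q ^ (K + 1) := by
            rw [hsplit, mul_pow]
        _ ≤ Real.exp (1 / q) * q ^ (K + 1) :=
            mul_le_mul_of_nonneg_right hstep2 (by positivity)
        _ ≤ Real.exp (1 / q) * q ^ K := by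
            apply mul_le_mul_of_nonneg_left _ (Real.exp_pos _).le
            exact pow_le_pow_of_le_one hq0.le hsmall.le (by omega)
    calc B = (C * C_R) ^ (K + 1) + r2 ^ (K + 1) := hBdef
      _ ≤ (C * C_R) * q ^ K + Real.exp (1 / q) * q ^ K := add_le_add h1 h2
      _ = (C * C_R + Real.exp (1 / q)) * q ^ K := by ring
  -- assemble
  calc (∑ m ∈ Finset.Icc (-(K : ℤ)) (K : ℤ),
          ∑' n : {n : ℤ // (K : ℤ) < |n|},
            ‖W (m, n.1)‖ * ‖H n.1‖)
      ≤ ∑ m ∈ Finset.Icc (-(K:ℤ)) (K:ℤ), (M * u m * B) * (2 * (1 - ρ)⁻¹) :=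
        Finset.sum_le_sum (fun m _ => hTm m)
    _ = (M * B * (2 * (1 - ρ)⁻¹)) * ∑ m ∈ Finset.Icc (-(K:ℤ)) (K:ℤ), u m := by
        rw [Finset.mul_sum]
        apply Finset.sum_congr rfl
        intro m _
        ring
    _ ≤ (M * B * (2 * (1 - ρ)⁻¹)) * (2 * Real.exp C) :=
        mul_le_mul_of_nonneg_left hsum_u
          (mul_nonneg (mul_nonneg hM.le hB0) hD0.le)
    _ = (M * ((2 * (1 - ρ)⁻¹) * (2 * Real.exp C))) * B := by ring
    _ ≤ (M * ((2 * (1 - ρ)⁻¹) * (2 * Real.exp C))) * ((C * C_R + Real.exp (1 / q)) * q ^ K) :=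
        mul_le_mul_of_nonneg_left hBq
          (mul_nonneg hM.le (mul_nonneg hD0.le hE0.le))
    _ = M * ((C * C_R + Real.exp (1 / q)) * ((2 * (1 - ρ)⁻¹) * (2 * Real.exp C))) * q ^ K := by
        ring
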